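/- Let R be a commutative domain with fraction field K, let A = (a_{ij}) be a k × l matrix with entries in R, and let b_1, …, b_l ∈ K be such that for each i the element a_{i1} b_1 + ⋯ + a_{il} b_l lies in R and is divisible in R by every nonzero minor (of every size) of the matrix A. Then there exist b'_1, …, b'_l ∈ R with a_{i1} b_1 + ⋯ + a_{il} b_l = a_{i1} b'_1 + ⋯ + a_{il} b'_l for all i = 1, …, k. -/

import Mathlib

theorem snoc_inj {n m : ℕ} {f : Fin n → Fin m} {a : Fin m} (hf : Function.Injective f)
    (ha : a ∉ Set.range f) : Function.Injective (Fin.snoc f a) := by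
  intro x y
  refine Fin.lastCases ?_ (fun x' => ?_) x <;> refine Fin.lastCases ?_ (fun y' => ?_) y <;>
    intro h <;> simp only [Fin.snoc_last, Fin.snoc_castSucc] at h
  · rfl
  · exact absurd ⟨y', h.symm⟩ ha
  · exact absurd ⟨x', h⟩ ha
  · rw [hf h]

theorem key_identity {R : Type*} [CommRing R] {k l r : ℕ} (A : Matrix (Fin k) (Fin l) R)
    (row : Fin r → Fin k) (col : Fin r → Fin l) (i : Fin k) (j : Fin l)
    (h0 : (A.submatrix (Fin.snoc row i) (Fin.snoc col j)).det = 0) :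
    A i j * (A.submatrix row col).det =
      ∑ t : Fin r, (-((-1 : R) ^ ((t : ℕ) + r) *
        (A.submatrix (Fin.snoc row i ∘ (t.castSucc).succAbove) col).det)) * A (row t) j := by
  have H := Matrix.det_succ_column (A.submatrix (Fin.snoc row i) (Fin.snoc col j)) (Fin.last r)
  rw [h0, Fin.sum_univ_castSucc] at H
  simp only [Matrix.submatrix_submatrix, Matrix.submatrix_apply, Fin.snoc_last,
    Fin.snoc_castSucc, Fin.succAbove_last, Fin.val_last, Fin.coe_castSucc] at H
  have hc : (Fin.snoc col j ∘ Fin.castSucc : Fin r → Fin l) = col := by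
    funext v; simp [Fin.snoc_castSucc]
  have hr : (Fin.snoc row i ∘ Fin.castSucc : Fin r → Fin k) = row := by
    funext v; simp [Fin.snoc_castSucc]
  rw [hc, hr] at H
  have hsgn : ((-1 : R) ^ (r + r)) = 1 := (Even.add_self r).neg_one_pow
  rw [hsgn] at H
  have H2 := eq_neg_of_add_eq_zero_right H.symm
  rw [← Finset.sum_neg_distrib] at H2
  rw [one_mul] at H2
  rw [H2]
  refine Finset.sum_congr rfl fun t _ => ?_
  ring

/-- Let `R` be a domain with fraction field `K`, `A` a `k × l` matrix over `R`,
and `b : Fin l → K` such that each `∑ j, A i j * b j` is (the image of) an element `s i` of `R`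
divisible by every nonzero minor of `A`.  Then there are `b' : Fin l → R` with
`∑ j, A i j * b' j = s i` for all `i`. -/
theorem stmt3 {R : Type*} [CommRing R] [IsDomain R] {k l : ℕ}
    (A : Matrix (Fin k) (Fin l) R) (b : Fin l → FractionRing R) (s : Fin k → R)
    (hs : ∀ i, (∑ j, algebraMap R (FractionRing R) (A i j) * b j)
        = algebraMap R (FractionRing R) (s i))
    (hdiv : ∀ (m : ℕ) (row : Fin m → Fin k) (col : Fin m → Fin l),
        Function.Injective row → Function.Injective col →
        (A.submatrix row col).det ≠ 0 → ∀ i, (A.submatrix row col).det ∣ s i) :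
    ∃ b' : Fin l → R, ∀ i, ∑ j, A i j * b' j = s i := by
  classical
  set f := algebraMap R (FractionRing R) with hf
  have finj : Function.Injective f := IsFractionRing.injective R (FractionRing R)
  -- the predicate: there is an m×m submatrix with nonzero determinant
  set P : ℕ → Prop := fun m => ∃ (row : Fin m → Fin k) (col : Fin m → Fin l),
      Function.Injective row ∧ Function.Injective col ∧ (A.submatrix row col).det ≠ 0 with hP
  have hP0 : P 0 := ⟨Fin.elim0, Fin.elim0, fun x => x.elim0, fun x => x.elim0, by
    simp [Matrix.det_fin_zero]⟩
  set r : ℕ := Nat.findGreatest P k with hrdef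
  obtain ⟨row, col, hrow, hcol, hd⟩ : P r :=
    Nat.findGreatest_spec (Nat.zero_le k) hP0
  set B := A.submatrix row col with hB
  set d := B.det with hd'
  -- maximality
  have hmax : ∀ (row' : Fin (r+1) → Fin k) (col' : Fin (r+1) → Fin l),
      Function.Injective row' → Function.Injective col' →
      (A.submatrix row' col').det = 0 := by
    intro row' col' hr' hc'
    by_contra hne
    have hle : r + 1 ≤ k := by
      simpa using Fintype.card_le_of_injective row' hr'
    exact Nat.findGreatest_is_greatest (lt_add_one r) hle ⟨row', col', hr', hc', hne⟩
  -- determinant vanishing for all snoc extensions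
  have hzero : ∀ (i : Fin k) (j : Fin l),
      (A.submatrix (Fin.snoc row i) (Fin.snoc col j)).det = 0 := by
    intro i j
    by_cases hi : i ∈ Set.range row
    · obtain ⟨u, hu⟩ := hi
      refine Matrix.det_zero_of_row_eq (i := u.castSucc) (j := Fin.last r) ?_ ?_
      · exact (Fin.castSucc_lt_last u).ne
      · funext v
        simp [Matrix.submatrix_apply, Fin.snoc_castSucc, Fin.snoc_last, hu]
    · by_cases hj : j ∈ Set.range col
      · obtain ⟨t, ht⟩ := hj
        refine Matrix.det_zero_of_column_eq (i := t.castSucc) (j := Fin.last r) ?_ ?_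
        · exact (Fin.castSucc_lt_last t).ne
        · intro v
          simp [Matrix.submatrix_apply, Fin.snoc_castSucc, Fin.snoc_last, ht]
      · exact hmax _ _ (snoc_inj hrow hi) (snoc_inj hcol hj)
  -- the coefficients
  set e : Fin k → Fin r → R := fun i t => -((-1 : R) ^ ((t : ℕ) + r) *
      (A.submatrix (Fin.snoc row i ∘ (t.castSucc).succAbove) col).det) with he
  have hkey : ∀ (i : Fin k) (j : Fin l), A i j * d = ∑ t, e i t * A (row t) j :=
    fun i j => key_identity A row col i j (hzero i j)
  -- Cramer solution
  have hdd : ∀ i, d ∣ s i := hdiv r row col hrow hcol hd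
  choose w hw using fun u : Fin r => hdd (row u)
  set x : Fin r → R := B.cramer w with hx
  have hBx : ∀ u, ∑ t, B u t * x t = s (row u) := by
    intro u
    have := congrFun (Matrix.mulVec_cramer B w) u
    rw [hw u]
    simpa [Matrix.mulVec, dotProduct] using this
  -- d * s i = ∑ u, e i u * s (row u), proven in the fraction field
  have hds : ∀ i, d * s i = ∑ u, e i u * s (row u) := by
    intro i
    apply finj
    rw [map_mul, map_sum, ← hs i, Finset.mul_sum]
    have : ∀ j, f d * (f (A i j) * b j) = (∑ u, f (e i u) * f (A (row u) j)) * b j := by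
      intro j
      rw [← mul_assoc, ← map_mul, mul_comm d (A i j), hkey i j, map_sum]
      congr 1
      rw [Finset.sum_congr rfl fun u _ => (map_mul f (e i u) (A (row u) j))]
    rw [Finset.sum_congr rfl fun j _ => this j]
    rw [Finset.sum_congr rfl fun j _ => Finset.sum_mul ..]
    rw [Finset.sum_comm]
    refine Finset.sum_congr rfl fun u _ => ?_
    rw [map_mul, ← hs (row u), Finset.mul_sum]
    exact Finset.sum_congr rfl fun j _ => by ring
  -- final construction
  refine ⟨fun j => ∑ t, if col t = j then x t else 0, fun i => ?_⟩
  have hswap : ∑ j, A i j * (∑ t, if col t = j then x t else 0)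
      = ∑ t, A i (col t) * x t := by
    rw [Finset.sum_congr rfl fun j _ => Finset.mul_sum ..]
    rw [Finset.sum_comm]
    refine Finset.sum_congr rfl fun t _ => ?_
    rw [Finset.sum_congr rfl fun j _ => (mul_ite (col t = j) (A i j) (x t) 0)]
    simp
  rw [hswap]
  apply mul_left_cancel₀ hd
  have step1 : d * ∑ t, A i (col t) * x t = ∑ t, (A i (col t) * d) * x t := by
    rw [Finset.mul_sum]
    exact Finset.sum_congr rfl fun t _ => by ring
  have step2 : ∑ t, (A i (col t) * d) * x t
      = ∑ t, (∑ u, e i u * A (row u) (col t)) * x t :=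
    Finset.sum_congr rfl fun t _ => by rw [hkey]
  have step3 : ∑ t, (∑ u, e i u * A (row u) (col t)) * x t
      = ∑ u, e i u * ∑ t, B u t * x t := by
    rw [Finset.sum_congr rfl fun t _ => Finset.sum_mul ..]
    rw [Finset.sum_comm]
    refine Finset.sum_congr rfl fun u _ => ?_
    rw [Finset.mul_sum]
    refine Finset.sum_congr rfl fun t _ => ?_
    rw [hB]
    simp only [Matrix.submatrix_apply]
    ring
  have step4 : ∑ u, e i u * ∑ t, B u t * x t = ∑ u, e i u * s (row u) :=
    Finset.sum_congr rfl fun u _ => by rw [hBx]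
  rw [step1, step2, step3, step4, ← hds i]
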